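/- Let n ≥ 4 and k be positive integers with k ≤ n/2. Then there exists an integer j with 1 ≤ j < n such that both ‖j/n‖ ≤ 1/(⌊√n⌋ − 1) and ‖jk/n‖ ≤ 1/(⌊√n⌋ − 1). -/
import Mathlib


/-- The distance from a real number `x` to the nearest integer. -/
noncomputable def distToInt (x : ℝ) : ℝ := ⨅ m : ℤ, |x - (m : ℝ)|

lemma distToInt_le (x : ℝ) (m : ℤ) : distToInt x ≤ |x - (m : ℝ)| :=
  ciInf_le ⟨0, by rintro y ⟨i, rfl⟩; exact abs_nonneg _⟩ m

/-- For `n ≥ 4` and `1 ≤ k ≤ n/2` there exists `1 ≤ j < n` with both `j/n`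
and `jk/n` within `1 / (⌊√n⌋ - 1)` of an integer. -/
theorem petersen_diophantine_index (n k : ℕ) (hn : 4 ≤ n) (hk1 : 1 ≤ k)
    (hk2 : 2 * k ≤ n) :
    ∃ j : ℕ, 1 ≤ j ∧ j < n ∧
      distToInt ((j : ℝ) / (n : ℝ)) ≤ 1 / ((Nat.sqrt n : ℝ) - 1) ∧
      distToInt ((j : ℝ) * (k : ℝ) / (n : ℝ)) ≤ 1 / ((Nat.sqrt n : ℝ) - 1) := by
  set q := Nat.sqrt n with hq
  have hq2 : 2 ≤ q := Nat.le_sqrt.2 (by omega)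
  have hqq : q * q ≤ n := by simpa [pow_two] using Nat.sqrt_le' n
  have hqn : q < n := lt_of_lt_of_le (by nlinarith) hqq
  have hn0 : (0:ℝ) < n := by positivity
  have hq2' : (2:ℝ) ≤ (q:ℝ) := by exact_mod_cast hq2
  have hq0 : (0:ℝ) < q := by linarith
  have hq1 : (0:ℝ) < (q:ℝ) - 1 := by linarith
  have hqq' : (q:ℝ) * q ≤ n := by exact_mod_cast hqq
  -- pigeonhole on fractional parts
  set g : Fin (q+1) → ℝ := fun j => Int.fract ((j : ℝ) * k / n) with hg
  have hg0 : ∀ j, 0 ≤ g j := fun j => Int.fract_nonneg _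
  have hg1 : ∀ j, g j < 1 := fun j => Int.fract_lt_one _
  have hfl0 : ∀ j, 0 ≤ ⌊g j * q⌋ := fun j =>
    Int.floor_nonneg.2 (mul_nonneg (hg0 j) hq0.le)
  let f : Fin (q+1) → Fin q := fun j =>
    ⟨(⌊g j * q⌋).toNat, by
      have h1 : g j * q < q := by nlinarith [hg1 j]
      have h2 : ⌊g j * q⌋ < (q:ℤ) := Int.floor_lt.2 (by exact_mod_cast h1)
      omega⟩
  have hcard : Fintype.card (Fin q) < Fintype.card (Fin (q+1)) := by simp
  obtain ⟨a, b, hab, hfab⟩ := Fintype.exists_ne_map_eq_of_card_lt f hcard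
  wlog hlt : a < b generalizing a b
  · exact this b a hab.symm hfab.symm (lt_of_le_of_ne (not_lt.1 hlt) hab.symm)
  -- floors of g·q are equal
  have hval : (⌊g a * q⌋).toNat = (⌊g b * q⌋).toNat := congrArg Fin.val hfab
  have hfloor : ⌊g a * q⌋ = ⌊g b * q⌋ := by
    have ha := hfl0 a; have hb := hfl0 b; omega
  have habs : |g a * q - g b * q| < 1 := Int.abs_sub_lt_one_of_floor_eq_floor hfloor
  have hdiff : |g b - g a| < 1 / q := by
    rw [← sub_mul, abs_mul, abs_of_pos hq0] at habs
    rw [abs_sub_comm, lt_div_iff₀ hq0]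
    linarith [habs]
  -- the witness
  refine ⟨(b:ℕ) - (a:ℕ), by omega, ?_, ?_, ?_⟩
  · have : (b:ℕ) ≤ q := by omega
    omega
  · -- distToInt (j/n) ≤ 1/(q-1)
    have hcast : (((b:ℕ) - (a:ℕ) : ℕ) : ℝ) = (b:ℝ) - (a:ℝ) := by
      push_cast [Nat.cast_sub hlt.le]; ring
    refine le_trans (distToInt_le _ 0) ?_
    rw [Int.cast_zero, sub_zero, abs_of_nonneg (by positivity)]
    have hje : (((b:ℕ) - (a:ℕ) : ℕ) : ℝ) ≤ (q:ℝ) := by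
      have hbq : (b:ℕ) ≤ q := by omega
      have : ((b:ℕ) - (a:ℕ) : ℕ) ≤ q := by omega
      exact_mod_cast this
    rw [div_le_div_iff₀ hn0 hq1]
    nlinarith
  · -- distToInt (j*k/n) ≤ 1/(q-1)
    have hcast : (((b:ℕ) - (a:ℕ) : ℕ) : ℝ) = (b:ℝ) - (a:ℝ) := by
      push_cast [Nat.cast_sub hlt.le]; ring
    set m : ℤ := ⌊(b:ℝ) * k / n⌋ - ⌊(a:ℝ) * k / n⌋ with hm
    refine le_trans (distToInt_le _ m) ?_
    have heq : (((b:ℕ) - (a:ℕ) : ℕ) : ℝ) * k / n - (m:ℝ) = g b - g a := by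
      simp only [hg, Int.fract, hm, hcast]
      push_cast
      ring
    rw [heq]
    have h1q : 1 / (q:ℝ) ≤ 1 / ((q:ℝ) - 1) := by
      apply div_le_div_of_nonneg_left one_pos.le hq1; linarith
    exact le_trans hdiff.le h1q
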